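/- arXiv:0902.3643 — 2 statements merged into one kernel-verified Lean document; each statement's English description precedes it below -/
import Mathlib

section
/- Let μ be a probability measure on ℝ² and let ε = (ε₁, ε₂) be real numbers with ε₂ > 0 and ε₁ + ε₂ < -1. Assume that (i) x ↦ e^{-ε₁x₁ - ε₂x₂} is μ-integrable, (ii) x ↦ (e^{x₁} - e^{x₂} - 1)^+ is μ-integrable, and (iii) v ↦ Φ(v+iε) · P̂(v+iε) is integrable on ℝ², where Φ(u) = ∫_{ℝ²} e^{i(u₁x₁ + u₂x₂)} dμ(x) for u ∈ ℂ² with Im(u₁) = ε₁, Im(u₂) = ε₂. Then ∫_{ℝ²} (e^{x₁} - e^{x₂} - 1)^+ dμ(x) = (2π)^{-2} ∫_{ℝ²} Φ(v₁+iε₁, v₂+iε₂) · P̂(v₁+iε₁, v₂+iε₂) dv₁ dv₂. -/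
open MeasureTheory Real Set Filter
open scoped Topology

noncomputable section

namespace SpreadAux

/-- payoff -/
def pay (x : ℝ × ℝ) : ℝ := max (rexp x.1 - rexp x.2 - 1) 0

def g (ε₁ ε₂ : ℝ) (x : ℝ × ℝ) : ℝ := rexp (ε₁ * x.1 + ε₂ * x.2) * pay x

lemma pay_nonneg (x : ℝ × ℝ) : 0 ≤ pay x := le_max_right _ _

lemma continuous_pay : Continuous pay := by
  unfold pay; fun_prop

lemma g_nonneg (ε₁ ε₂ : ℝ) (x : ℝ × ℝ) : 0 ≤ g ε₁ ε₂ x :=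
  mul_nonneg (exp_pos _).le (pay_nonneg x)

lemma continuous_g (ε₁ ε₂ : ℝ) : Continuous (g ε₁ ε₂) := by
  unfold g pay; fun_prop

lemma pay_support {x : ℝ × ℝ} (h : pay x ≠ 0) : 0 < x.1 ∧ x.2 < x.1 := by
  have h' : 0 < rexp x.1 - rexp x.2 - 1 := by
    rcases lt_or_ge 0 (rexp x.1 - rexp x.2 - 1) with h1 | h1
    · exact h1
    · exact absurd (max_eq_right h1) h
  have e2 : (0:ℝ) < rexp x.2 := exp_pos _
  constructor
  · have : rexp 0 < rexp x.1 := by rw [exp_zero]; linarith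
    exact exp_lt_exp.mp this
  · have : rexp x.2 < rexp x.1 := by linarith
    exact exp_lt_exp.mp this

lemma pay_le {x : ℝ × ℝ} : pay x ≤ rexp x.1 := by
  have := exp_pos x.2
  unfold pay
  rcases max_cases (rexp x.1 - rexp x.2 - 1) 0 with ⟨h1, _⟩ | ⟨h1, _⟩ <;> rw [h1]
  · linarith
  · positivity

lemma g_le_one {ε₁ ε₂ : ℝ} (h₂ : 0 < ε₂) (h : ε₁ + ε₂ < -1) (x : ℝ × ℝ) :
    g ε₁ ε₂ x ≤ 1 := by
  by_cases hp : pay x = 0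
  · simp [g, hp]
  · obtain ⟨hx1, hx21⟩ := pay_support hp
    have h1 : g ε₁ ε₂ x ≤ rexp (ε₁ * x.1 + ε₂ * x.2) * rexp x.1 :=
      mul_le_mul_of_nonneg_left pay_le (exp_pos _).le
    have h2 : rexp (ε₁ * x.1 + ε₂ * x.2) * rexp x.1 = rexp ((ε₁ + 1) * x.1 + ε₂ * x.2) := by
      rw [← Real.exp_add]; ring_nf
    have h3 : (ε₁ + 1) * x.1 + ε₂ * x.2 ≤ (ε₁ + 1 + ε₂) * x.1 := by nlinarith
    have h4 : (ε₁ + 1 + ε₂) * x.1 ≤ 0 := by nlinarith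
    calc g ε₁ ε₂ x ≤ rexp ((ε₁ + 1) * x.1 + ε₂ * x.2) := by rw [← h2]; exact h1
    _ ≤ rexp 0 := exp_le_exp.mpr (by linarith)
    _ = 1 := exp_zero

lemma integrableOn_exp_mul_Iic {b : ℝ} (hb : 0 < b) (a : ℝ) :
    IntegrableOn (fun t : ℝ => rexp (b * t)) (Iic a) := by
  refine integrableOn_Iic_of_intervalIntegral_norm_bounded (rexp (b * a) / b) a
    (fun y => (by fun_prop : Continuous fun t : ℝ => rexp (b * t)).integrableOn_Ioc) tendsto_id ?_
  filter_upwards with y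
  simp only [id_eq]
  have h1 : ∀ t, ‖rexp (b * t)‖ = rexp (b * t) := fun t => norm_of_nonneg (exp_pos _).le
  simp_rw [h1]
  have h2 : ∀ t, rexp (b * t) = rexp (b * t) := fun _ => rfl
  have h3 : (∫ t in y..a, rexp (b * t)) = (rexp (b * a) - rexp (b * y)) / b := by
    have : ∀ t ∈ uIcc y a, HasDerivAt (fun u => rexp (b * u) / b) (rexp (b * t)) t := by
      intro t _
      have := ((Real.hasDerivAt_exp (b * t)).comp t ((hasDerivAt_id t).const_mul b))
      simpa using this.div_const b |>.congr_deriv (by field_simp)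
    rw [intervalIntegral.integral_eq_sub_of_hasDerivAt this
      (((Real.continuous_exp.comp (continuous_const.mul continuous_id)).intervalIntegrable _ _))]
    field_simp
  rw [h3]
  have := (exp_pos (b * y)).le
  rw [div_le_div_iff_of_pos_right hb] at *
  · linarith
  
lemma integral_exp_mul_Iic {b : ℝ} (hb : 0 < b) (a : ℝ) :
    ∫ t in Iic a, rexp (b * t) = rexp (b * a) / b := by
  refine tendsto_nhds_unique
    (intervalIntegral_tendsto_integral_Iic _ (integrableOn_exp_mul_Iic hb a) tendsto_id) ?_
  have h3 : ∀ y : ℝ, (∫ t in y..a, rexp (b * t)) = (rexp (b * a) - rexp (b * y)) / b := by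
    intro y
    have : ∀ t ∈ uIcc y a, HasDerivAt (fun u => rexp (b * u) / b) (rexp (b * t)) t := by
      intro t _
      have := ((Real.hasDerivAt_exp (b * t)).comp t ((hasDerivAt_id t).const_mul b))
      simpa using this.div_const b |>.congr_deriv (by field_simp)
    rw [intervalIntegral.integral_eq_sub_of_hasDerivAt this
      (((Real.continuous_exp.comp (continuous_const.mul continuous_id)).intervalIntegrable _ _))]
    field_simp
  simp_rw [h3]
  have hlim : Tendsto (fun y : ℝ => rexp (b * y)) atBot (𝓝 0) := by
    apply Real.tendsto_exp_atBot.comp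
    exact (tendsto_const_mul_atBot_of_pos hb).mpr tendsto_id
  have : Tendsto (fun y : ℝ => (rexp (b * a) - rexp (b * y)) / b) atBot
      (𝓝 ((rexp (b * a) - 0) / b)) := (tendsto_const_nhds.sub hlim).div_const b
  simpa using this


lemma g_fiber_bound (ε₁ ε₂ : ℝ) (x₁ x₂ : ℝ) :
    g ε₁ ε₂ (x₁, x₂) ≤ rexp ((1 + ε₁) * x₁) * (Iic x₁).indicator (fun t => rexp (ε₂ * t)) x₂ := by
  by_cases hp : pay (x₁, x₂) = 0
  · rw [show g ε₁ ε₂ (x₁, x₂) = 0 by simp [g, hp]]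
    exact mul_nonneg (exp_pos _).le (Set.indicator_nonneg (fun t _ => (exp_pos _).le) _)
  · obtain ⟨h1, h2⟩ := pay_support hp
    rw [indicator_of_mem (by simpa using h2.le : x₂ ∈ Iic x₁)]
    have : g ε₁ ε₂ (x₁, x₂) ≤ rexp (ε₁ * x₁ + ε₂ * x₂) * rexp x₁ :=
      mul_le_mul_of_nonneg_left pay_le (exp_pos _).le
    calc g ε₁ ε₂ (x₁, x₂) ≤ rexp (ε₁ * x₁ + ε₂ * x₂) * rexp x₁ := this
    _ = rexp ((1 + ε₁) * x₁) * rexp (ε₂ * x₂) := by rw [← Real.exp_add, ← Real.exp_add]; ring_nf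
    
lemma g_zero_of_nonpos (ε₁ ε₂ : ℝ) {x₁ : ℝ} (h : x₁ ≤ 0) (x₂ : ℝ) : g ε₁ ε₂ (x₁, x₂) = 0 := by
  by_cases hp : pay (x₁, x₂) = 0
  · simp [g, hp]
  · exact absurd ((pay_support hp).1.trans_le h) (lt_irrefl 0)

lemma integrable_g_fiber {ε₁ ε₂ : ℝ} (h₂ : 0 < ε₂) (x₁ : ℝ) :
    Integrable (fun x₂ => g ε₁ ε₂ (x₁, x₂)) := by
  have hmaj : Integrable (fun x₂ : ℝ =>
      rexp ((1 + ε₁) * x₁) * (Iic x₁).indicator (fun t => rexp (ε₂ * t)) x₂) := by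
    exact (((integrableOn_exp_mul_Iic h₂ x₁).integrable_indicator measurableSet_Iic).const_mul _)
  refine hmaj.mono' ((continuous_g ε₁ ε₂).comp (by fun_prop)).aestronglyMeasurable ?_
  filter_upwards with x₂
  rw [norm_of_nonneg (g_nonneg _ _ _)]
  exact g_fiber_bound ε₁ ε₂ x₁ x₂

lemma integrable_g {ε₁ ε₂ : ℝ} (h₂ : 0 < ε₂) (h : ε₁ + ε₂ < -1) :
    Integrable (g ε₁ ε₂) (volume : Measure (ℝ × ℝ)) := by
  rw [show (volume : Measure (ℝ × ℝ)) = (volume : Measure ℝ).prod volume from Measure.volume_eq_prod ℝ ℝ]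
  refine (integrable_prod_iff ((continuous_g ε₁ ε₂).aestronglyMeasurable)).2 ⟨?_, ?_⟩
  · filter_upwards with x₁ using integrable_g_fiber h₂ x₁
  · -- integrability of x₁ ↦ ∫ ‖g (x₁, x₂)‖ dx₂
    have hmaj : Integrable (fun x₁ : ℝ =>
        (Ioi (0:ℝ)).indicator (fun t => rexp ((1 + ε₁ + ε₂) * t) / ε₂) x₁) := by
      refine IntegrableOn.integrable_indicator ?_ measurableSet_Ioi
      have h0 : IntegrableOn (fun t : ℝ => rexp (-(-(1 + ε₁ + ε₂)) * t)) (Ioi 0) :=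
        exp_neg_integrableOn_Ioi 0 (by linarith)
      have h0' := h0.mul_const ε₂⁻¹
      simpa [div_eq_mul_inv, IntegrableOn] using h0'
    refine hmaj.mono' ?_ ?_
    · have hsm : StronglyMeasurable (Function.uncurry fun x₁ x₂ : ℝ => ‖g ε₁ ε₂ (x₁, x₂)‖) := by
        have he : (Function.uncurry fun x₁ x₂ : ℝ => ‖g ε₁ ε₂ (x₁, x₂)‖)
            = fun p : ℝ × ℝ => ‖g ε₁ ε₂ p‖ := rfl
        rw [he]
        exact (continuous_g ε₁ ε₂).norm.stronglyMeasurable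
      exact hsm.integral_prod_right.aestronglyMeasurable
    · filter_upwards with x₁
      rw [norm_of_nonneg (integral_nonneg (fun x₂ => norm_nonneg _))]
      by_cases hx : x₁ ≤ 0
      · have : ∀ x₂ : ℝ, ‖g ε₁ ε₂ (x₁, x₂)‖ = 0 := fun x₂ => by
          rw [g_zero_of_nonpos ε₁ ε₂ hx, norm_zero]
        simp only [this, integral_zero]
        exact Set.indicator_nonneg (fun t _ => by positivity) _
      · push_neg at hx
        rw [indicator_of_mem (by simpa using hx)]
        have hb : ∀ x₂ : ℝ, ‖g ε₁ ε₂ (x₁, x₂)‖ ≤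
            rexp ((1 + ε₁) * x₁) * (Iic x₁).indicator (fun t => rexp (ε₂ * t)) x₂ := by
          intro x₂
          rw [norm_of_nonneg (g_nonneg _ _ _)]
          exact g_fiber_bound ε₁ ε₂ x₁ x₂
        have hmaj2 : Integrable (fun x₂ : ℝ =>
            rexp ((1 + ε₁) * x₁) * (Iic x₁).indicator (fun t => rexp (ε₂ * t)) x₂) :=
          (((integrableOn_exp_mul_Iic h₂ x₁).integrable_indicator measurableSet_Iic).const_mul _)
        calc (∫ x₂ : ℝ, ‖g ε₁ ε₂ (x₁, x₂)‖)
            ≤ ∫ x₂ : ℝ, rexp ((1 + ε₁) * x₁) * (Iic x₁).indicator (fun t => rexp (ε₂ * t)) x₂ :=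
              integral_mono ((integrable_g_fiber h₂ x₁).norm) hmaj2 hb
        _ = rexp ((1 + ε₁) * x₁) * ∫ x₂ : ℝ, (Iic x₁).indicator (fun t => rexp (ε₂ * t)) x₂ :=
              integral_const_mul _ _
        _ = rexp ((1 + ε₁) * x₁) * (rexp (ε₂ * x₁) / ε₂) := by
              rw [integral_indicator measurableSet_Iic, integral_exp_mul_Iic h₂]
        _ = rexp ((1 + ε₁ + ε₂) * x₁) / ε₂ := by
              rw [← mul_div_assoc, ← Real.exp_add]; ring_nf


lemma hasDerivAt_cexp_mul (c : ℂ) (y : ℝ) :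
    HasDerivAt (fun t : ℝ => Complex.exp (c * t)) (c * Complex.exp (c * y)) y := by
  have h0 : HasDerivAt (fun t : ℝ => (t : ℂ)) 1 y := by
    exact Complex.ofRealCLM.hasDerivAt (x := y)
  have := (h0.const_mul c).cexp
  simpa [mul_comm] using this

lemma integrableOn_cexp_mul {c : ℂ} (hc : c.re < 0) (a : ℝ) :
    IntegrableOn (fun t : ℝ => Complex.exp (c * t)) (Ioi a) := by
  have hmaj : IntegrableOn (fun t : ℝ => rexp (-(-c.re) * t)) (Ioi a) :=
    exp_neg_integrableOn_Ioi a (by linarith)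
  refine hmaj.mono' ?_ ?_
  · exact (Continuous.aestronglyMeasurable (by fun_prop))
  · filter_upwards with t
    rw [Complex.norm_exp]
    simp [Complex.mul_re]

lemma tendsto_cexp_mul_atTop {c : ℂ} (hc : c.re < 0) :
    Tendsto (fun t : ℝ => Complex.exp (c * t)) atTop (𝓝 0) := by
  rw [tendsto_zero_iff_norm_tendsto_zero]
  have h1 : ∀ t : ℝ, ‖Complex.exp (c * t)‖ = rexp (c.re * t) := by
    intro t; rw [Complex.norm_exp]; simp [Complex.mul_re]
  simp_rw [h1]
  apply Real.tendsto_exp_atBot.comp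
  exact (tendsto_const_mul_atBot_of_neg hc).mpr tendsto_id

lemma cexp_mul_log {K : ℝ} (hK : 0 < K) (c : ℂ) :
    Complex.exp (c * (Real.log K : ℂ)) = (K : ℂ) ^ c := by
  rw [Complex.cpow_def_of_ne_zero (by exact_mod_cast hK.ne'), ← Complex.ofReal_log hK.le,
    mul_comm]

/-- Key inner integral: `∫ e^{sy} (e^y - K)^+ dy = K^{s+1}/(s(s+1))` for `Re s < -1`. -/
lemma integral_inner {s : ℂ} (hs : s.re < -1) {K : ℝ} (hK : 0 < K) :
    ∫ y : ℝ, Complex.exp (s * y) * ((max (rexp y - K) 0 : ℝ) : ℂ)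
      = (K : ℂ) ^ (s + 1) / (s * (s + 1)) := by
  have hs0 : s ≠ 0 := fun h => by simp [h] at hs; linarith
  have hs1 : s + 1 ≠ 0 := fun h => by
    have : (s + 1).re = 0 := by rw [h]; simp
    simp [Complex.add_re] at this; linarith
  set a := Real.log K with ha
  set φ : ℝ → ℂ := fun y => Complex.exp ((s+1) * y) - K * Complex.exp (s * y) with hφ
  have hind : (fun y : ℝ => Complex.exp (s * y) * ((max (rexp y - K) 0 : ℝ) : ℂ))
      = (Ioi a).indicator φ := by
    funext y
    by_cases hy : a < y
    · have hKy : K < rexp y := by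
        rw [← Real.exp_log hK]; exact Real.exp_lt_exp.mpr hy
      rw [Set.indicator_of_mem (show y ∈ Ioi a from hy)]
      rw [max_eq_left (by linarith)]
      push_cast
      show Complex.exp (s * y) * (Complex.exp (y:ℂ) - K) = _
      rw [hφ, mul_sub, ← Complex.exp_add]
      ring_nf
    · have hKy : rexp y ≤ K := by
        rw [← Real.exp_log hK]; exact Real.exp_le_exp.mpr (not_lt.mp hy)
      rw [Set.indicator_of_notMem (show y ∉ Ioi a from hy)]
      rw [max_eq_right (by linarith)]
      simp
  rw [hind, integral_indicator measurableSet_Ioi]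
  set F : ℝ → ℂ := fun y => Complex.exp ((s+1) * y) / (s+1) - K * (Complex.exp (s * y) / s)
    with hF
  have hderiv : ∀ y ∈ Ioi a, HasDerivAt F (φ y) y := by
    intro y _
    have h1 := (hasDerivAt_cexp_mul (s+1) y).div_const (s+1)
    have h2 := ((hasDerivAt_cexp_mul s y).div_const s).const_mul (K : ℂ)
    have := h1.sub h2
    rw [mul_div_cancel_left₀ _ hs1, mul_div_cancel_left₀ _ hs0] at this
    exact this
  have hcont : ContinuousWithinAt F (Ici a) a := by
    apply Continuous.continuousWithinAt
    fun_prop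
  have hφint : IntegrableOn φ (Ioi a) := by
    apply Integrable.sub
    · exact integrableOn_cexp_mul (by simp [Complex.add_re]; linarith) a
    · exact (integrableOn_cexp_mul (by linarith) a).const_mul _
  have htend : Tendsto F atTop (𝓝 0) := by
    have h1 := (tendsto_cexp_mul_atTop (show (s+1).re < 0 by simp [Complex.add_re]; linarith)).div_const (s+1)
    have h2 := ((tendsto_cexp_mul_atTop (show s.re < 0 by linarith)).div_const s).const_mul (K:ℂ)
    have := h1.sub h2
    simpa using this
  have hKs : (K : ℂ) * (K : ℂ) ^ s = (K : ℂ) ^ (s + 1) := by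
    rw [Complex.cpow_add _ _ (by exact_mod_cast hK.ne'), Complex.cpow_one]; ring
  rw [MeasureTheory.integral_Ioi_of_hasDerivAt_of_tendsto hcont hderiv hφint htend, hF]
  simp only [ha]
  rw [cexp_mul_log hK, cexp_mul_log hK, ← mul_div_assoc, hKs]
  field_simp
  ring


lemma cpow_real_pos {r : ℝ} (hr : 0 < r) (c : ℂ) :
    (r : ℂ) ^ c = Complex.exp (c * (Real.log r : ℂ)) := by
  rw [Complex.cpow_def_of_ne_zero (by exact_mod_cast hr.ne'), ← Complex.ofReal_log hr.le,
    mul_comm]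

lemma ofReal_pos_eq_cexp {r : ℝ} (hr : 0 < r) :
    (r : ℂ) = Complex.exp ((Real.log r : ℝ) : ℂ) := by
  rw [← Complex.ofReal_exp, Real.exp_log hr]

lemma Gamma_ne_zero_of_re_pos {z : ℂ} (hz : 0 < z.re) : Complex.Gamma z ≠ 0 := by
  refine Complex.Gamma_ne_zero fun m => ?_
  intro h
  rw [h] at hz
  simp at hz
  have : (0:ℝ) ≤ (m:ℝ) := Nat.cast_nonneg m
  linarith

/-- Beta-type integral over the real line. -/
lemma integral_beta {t w : ℂ} (ht : 0 < t.re) (hw : 0 < w.re) :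
    ∫ y : ℝ, Complex.exp (t * y) * ((1 + rexp y : ℝ) : ℂ) ^ (-(t + w))
      = Complex.Gamma t * Complex.Gamma w / Complex.Gamma (t + w) := by
  have hΓ : Complex.Gamma (t + w) ≠ 0 :=
    Gamma_ne_zero_of_re_pos (by simp [Complex.add_re]; linarith)
  have key : Complex.betaIntegral t w
      = ∫ y : ℝ, Complex.exp (t * y) * ((1 + rexp y : ℝ) : ℂ) ^ (-(t + w)) := by
    set ψ : ℝ → ℝ := fun y => rexp y / (1 + rexp y) with hψ
    have hD : ∀ y : ℝ, (0:ℝ) < 1 + rexp y := fun y => by positivity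
    have himg : ψ '' univ = Ioo (0:ℝ) 1 := by
      ext x
      simp only [image_univ, mem_range, mem_Ioo]
      constructor
      · rintro ⟨y, rfl⟩
        exact ⟨div_pos (exp_pos _) (hD y), (div_lt_one (hD y)).mpr (by linarith [exp_pos y])⟩
      · rintro ⟨hx0, hx1⟩
        refine ⟨Real.log (x / (1 - x)), ?_⟩
        have h1x : (0:ℝ) < 1 - x := by linarith
        have hex : rexp (Real.log (x / (1 - x))) = x / (1 - x) :=
          Real.exp_log (div_pos hx0 h1x)
        simp only [hψ, hex]
        field_simp
        ring
      
    have hderiv : ∀ y ∈ (univ : Set ℝ), HasDerivWithinAt ψ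
        (rexp y / (1 + rexp y) ^ 2) univ y := by
      intro y _
      have h1 : HasDerivAt ψ (rexp y / (1 + rexp y) ^ 2) y := by
        have hd := (Real.hasDerivAt_exp y).div ((hasDerivAt_const y (1:ℝ)).add
          (Real.hasDerivAt_exp y)) (hD y).ne'
        rw [show rexp y / (1 + rexp y) ^ 2 = (rexp y * (1 + rexp y)
          - rexp y * (0 + rexp y)) / (1 + rexp y) ^ 2 by ring]
        exact hd
      exact h1.hasDerivWithinAt
    have hinj : InjOn ψ univ := by
      intro a _ b _ hab
      simp only [hψ] at hab
      rw [div_eq_div_iff (hD a).ne' (hD b).ne'] at hab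
      have : rexp a = rexp b := by nlinarith [exp_pos a, exp_pos b]
      exact Real.exp_injective this
    rw [Complex.betaIntegral, intervalIntegral.integral_of_le zero_le_one,
      integral_Ioc_eq_integral_Ioo, ← himg,
      integral_image_eq_integral_abs_deriv_smul MeasurableSet.univ hderiv hinj,
      setIntegral_univ]
    congr 1
    funext y
    set E := rexp y with hE
    set D := 1 + rexp y with hDdef
    have hE0 : (0:ℝ) < E := exp_pos y
    have hD0 : (0:ℝ) < D := hD y
    have hψy : ψ y = E / D := rfl
    have h1c : (1:ℂ) - ((ψ y : ℝ) : ℂ) = ((1/D : ℝ) : ℂ) := by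
      rw [← Complex.ofReal_one, ← Complex.ofReal_sub]
      congr 1
      rw [hψy]
      field_simp
      simp only [hDdef, hE]
      ring
    have habs : |rexp y / (1 + rexp y) ^ 2| = E / D^2 := by
      rw [abs_of_pos]; positivity
    rw [Complex.real_smul, habs, h1c, hψy,
      cpow_real_pos (div_pos hE0 hD0), cpow_real_pos (by positivity : (0:ℝ) < 1/D),
      cpow_real_pos hD0, ofReal_pos_eq_cexp (by positivity : (0:ℝ) < E / D^2)]
    rw [← Complex.exp_add, ← Complex.exp_add, ← Complex.exp_add]
    congr 1
    have hlog1 : Real.log (E / D^2) = y - 2 * Real.log D := by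
      rw [Real.log_div hE0.ne' (by positivity), Real.log_pow, hE, Real.log_exp]
      push_cast; ring
    have hlog2 : Real.log (E / D) = y - Real.log D := by
      rw [Real.log_div hE0.ne' hD0.ne', hE, Real.log_exp]
    have hlog3 : Real.log (1 / D) = - Real.log D := by
      rw [one_div, Real.log_inv]
    rw [hlog1, hlog2, hlog3]
    push_cast
    ring
  rw [← key] at *
  rw [eq_div_iff hΓ, mul_comm, ← Complex.Gamma_mul_Gamma_eq_betaIntegral ht hw]


/-- The explicit transform `P̂(v + iε)`. -/
def Pf (ε₁ ε₂ : ℝ) (v : ℝ × ℝ) : ℂ :=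
  Complex.Gamma
      (Complex.I * (((v.1 : ℂ) + Complex.I * (ε₁ : ℂ)) + ((v.2 : ℂ) + Complex.I * (ε₂ : ℂ))) - 1) *
    Complex.Gamma (-Complex.I * ((v.2 : ℂ) + Complex.I * (ε₂ : ℂ))) /
    Complex.Gamma (Complex.I * ((v.1 : ℂ) + Complex.I * (ε₁ : ℂ)) + 1)

lemma integrable_kernel_g {ε₁ ε₂ : ℝ} (h₂ : 0 < ε₂) (h : ε₁ + ε₂ < -1) (v : ℝ × ℝ) :
    Integrable (fun x : ℝ × ℝ =>
      Complex.exp (-(Complex.I * ((v.1 : ℂ) * x.1 + (v.2 : ℂ) * x.2))) * (g ε₁ ε₂ x : ℂ))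
      (volume : Measure (ℝ × ℝ)) := by
  refine (integrable_g h₂ h).mono' (Continuous.aestronglyMeasurable
    (Continuous.mul (Complex.continuous_exp.comp (by fun_prop))
      (Complex.continuous_ofReal.comp (continuous_g ε₁ ε₂)))) ?_
  filter_upwards with x
  rw [norm_mul, Complex.norm_exp]
  have : (-(Complex.I * ((v.1 : ℂ) * x.1 + (v.2 : ℂ) * x.2))).re = 0 := by
    simp [Complex.mul_re]
  rw [this, Real.exp_zero, one_mul, Complex.norm_real, Real.norm_eq_abs,
    _root_.abs_of_nonneg (g_nonneg _ _ _)]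

/-- **Key computation**: the Fourier transform of `g` is the Gamma-expression `Pf`. -/
lemma transform {ε₁ ε₂ : ℝ} (h₂ : 0 < ε₂) (h : ε₁ + ε₂ < -1) (v : ℝ × ℝ) :
    (∫ x : ℝ × ℝ,
      Complex.exp (-(Complex.I * ((v.1 : ℂ) * x.1 + (v.2 : ℂ) * x.2))) * (g ε₁ ε₂ x : ℂ))
      = Pf ε₁ ε₂ v := by
  set s : ℂ := (ε₁ : ℂ) - Complex.I * v.1 with hs_def
  set t : ℂ := (ε₂ : ℂ) - Complex.I * v.2 with ht_def
  set w : ℂ := -1 - s - t with hw_def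
  have hsre : s.re = ε₁ := by simp [hs_def]
  have htre : t.re = ε₂ := by simp [ht_def]
  have hwre : w.re = -1 - ε₁ - ε₂ := by simp [hw_def, hsre, htre]
  have hs0 : s ≠ 0 := fun hh => by rw [hh] at hsre; simp at hsre; linarith [hsre]
  have hs1 : s + 1 ≠ 0 := fun hh => by
    have := congrArg Complex.re hh; simp [hsre] at this; linarith
  have hΓd : Complex.Gamma (-1 - s) ≠ 0 :=
    Gamma_ne_zero_of_re_pos (by simp [hsre]; linarith)
  have hInt := integrable_kernel_g h₂ h v
  rw [show (volume : Measure (ℝ × ℝ)) = (volume : Measure ℝ).prod volume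
      from Measure.volume_eq_prod ℝ ℝ] at hInt ⊢
  rw [MeasureTheory.integral_prod_symm _ hInt]
  have hin : ∀ x₂ : ℝ, (∫ x₁ : ℝ,
      Complex.exp (-(Complex.I * ((v.1 : ℂ) * x₁ + (v.2 : ℂ) * x₂))) * (g ε₁ ε₂ (x₁, x₂) : ℂ))
      = Complex.exp (t * x₂) * (((rexp x₂ + 1 : ℝ) : ℂ) ^ (s + 1) / (s * (s + 1))) := by
    intro x₂
    have hpt : ∀ x₁ : ℝ,
        Complex.exp (-(Complex.I * ((v.1 : ℂ) * x₁ + (v.2 : ℂ) * x₂))) * (g ε₁ ε₂ (x₁, x₂) : ℂ)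
        = Complex.exp (t * x₂) *
            (Complex.exp (s * x₁) * ((max (rexp x₁ - (rexp x₂ + 1)) 0 : ℝ) : ℂ)) := by
      intro x₁
      have hg : g ε₁ ε₂ (x₁, x₂)
          = rexp (ε₁ * x₁) * rexp (ε₂ * x₂) * max (rexp x₁ - (rexp x₂ + 1)) 0 := by
        simp only [g, pay]
        rw [← Real.exp_add]
        norm_num
        ring_nf
      rw [hg]
      push_cast
      have hkey : Complex.exp (-(Complex.I * ((v.1:ℂ) * x₁ + (v.2:ℂ) * x₂))) *
          (Complex.exp ((ε₁:ℂ) * x₁) * Complex.exp ((ε₂:ℂ) * x₂))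
          = Complex.exp (t * x₂) * Complex.exp (s * x₁) := by
        rw [← Complex.exp_add, ← Complex.exp_add, ← Complex.exp_add]
        congr 1
        rw [hs_def, ht_def]
        ring
      calc Complex.exp (-(Complex.I * ((v.1:ℂ) * x₁ + (v.2:ℂ) * x₂))) *
          (Complex.exp ((ε₁:ℂ) * x₁) * Complex.exp ((ε₂:ℂ) * x₂) *
            ((max (rexp x₁ - (rexp x₂ + 1)) 0 : ℝ) : ℂ))
          = (Complex.exp (-(Complex.I * ((v.1:ℂ) * x₁ + (v.2:ℂ) * x₂))) *
            (Complex.exp ((ε₁:ℂ) * x₁) * Complex.exp ((ε₂:ℂ) * x₂))) *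
            ((max (rexp x₁ - (rexp x₂ + 1)) 0 : ℝ) : ℂ) := by ring
        _ = (Complex.exp (t * x₂) * Complex.exp (s * x₁)) *
            ((max (rexp x₁ - (rexp x₂ + 1)) 0 : ℝ) : ℂ) := by rw [hkey]
        _ = Complex.exp (t * x₂) *
            (Complex.exp (s * x₁) * ((max (rexp x₁ - (rexp x₂ + 1)) 0 : ℝ) : ℂ)) := by ring
    simp_rw [hpt]
    rw [MeasureTheory.integral_const_mul]
    congr 1
    exact integral_inner (by rw [hsre]; linarith) (by positivity)
  simp_rw [hin]
  have hsw : s + 1 = -(t + w) := by rw [hw_def]; ring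
  have hout : ∀ x₂ : ℝ, Complex.exp (t * x₂) * (((rexp x₂ + 1 : ℝ) : ℂ) ^ (s + 1) / (s * (s + 1)))
      = (Complex.exp (t * x₂) * ((1 + rexp x₂ : ℝ) : ℂ) ^ (-(t + w))) * (s * (s + 1))⁻¹ := by
    intro x₂
    rw [hsw, add_comm (rexp x₂) 1]
    ring
  simp_rw [hout]
  rw [MeasureTheory.integral_mul_const]
  rw [integral_beta (by rw [htre]; exact h₂) (by rw [hwre]; linarith)]
  have htw : t + w = -1 - s := by rw [hw_def]; ring
  rw [htw]
  -- identify the Gamma arguments in Pf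
  have hA : Complex.I * (((v.1 : ℂ) + Complex.I * (ε₁ : ℂ)) + ((v.2 : ℂ) + Complex.I * (ε₂ : ℂ)))
      - 1 = w := by
    rw [hw_def, hs_def, ht_def]
    linear_combination ((ε₁ : ℂ) + (ε₂ : ℂ)) * Complex.I_sq
  have hB : -Complex.I * ((v.2 : ℂ) + Complex.I * (ε₂ : ℂ)) = t := by
    rw [ht_def]
    linear_combination (-(ε₂ : ℂ)) * Complex.I_sq
  have hC : Complex.I * ((v.1 : ℂ) + Complex.I * (ε₁ : ℂ)) + 1 = 1 - s := by
    rw [hs_def]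
    linear_combination ((ε₁ : ℂ)) * Complex.I_sq
  rw [Pf, hA, hB, hC]
  have hrec : Complex.Gamma (1 - s) = s * (s + 1) * Complex.Gamma (-1 - s) := by
    have h1 : (-s) ≠ 0 := neg_ne_zero.mpr hs0
    have h2 : (-1 - s : ℂ) ≠ 0 := fun hh => by
      have := congrArg Complex.re hh; simp [hsre] at this; linarith
    rw [show (1 : ℂ) - s = -s + 1 by ring, Complex.Gamma_add_one _ h1,
      show (-s : ℂ) = (-1 - s) + 1 by ring, Complex.Gamma_add_one _ h2]
    ring
  rw [hrec]
  field_simp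


lemma gauss1 {σ : ℝ} (hσ : 0 < σ) (c : ℝ) :
    ∫ v : ℝ, Complex.exp (-(σ:ℂ) * (v:ℂ)^2 + (Complex.I * c) * v + 0)
      = ((π/σ : ℝ) : ℂ) ^ (1/2 : ℂ) * Complex.exp (-((c:ℂ)^2 / (4*σ))) := by
  have h1 : ((π:ℂ) / -(-(σ:ℂ))) ^ (1/2:ℂ) = ((π/σ : ℝ):ℂ) ^ (1/2:ℂ) := by
    rw [neg_neg]; push_cast; ring_nf
  have h2 : (0:ℂ) - (Complex.I*(c:ℂ))^2/(4 * -(σ:ℂ)) = -((c:ℂ)^2/(4*(σ:ℂ))) := by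
    have hσ0 : (σ:ℂ) ≠ 0 := by exact_mod_cast hσ.ne'
    rw [mul_pow, Complex.I_sq]
    field_simp
    ring
  rw [integral_cexp_quadratic (by simpa using hσ : (-(σ:ℂ)).re < 0) (Complex.I * c) 0, h1, h2]

lemma integrable_gauss1_cexp {σ : ℝ} (hσ : 0 < σ) (c : ℝ) :
    Integrable (fun v : ℝ => Complex.exp (-(σ:ℂ) * (v:ℂ)^2 + (Complex.I * c) * v + 0)) :=
  integrable_cexp_quadratic' (by simpa using hσ) _ _

/-- 2D Gaussian Fourier kernel. -/
lemma gauss2 {σ : ℝ} (hσ : 0 < σ) (z : ℝ × ℝ) :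
    ∫ v : ℝ × ℝ, Complex.exp (Complex.I * ((v.1:ℂ) * z.1 + (v.2:ℂ) * z.2)
        + -(σ:ℂ) * ((v.1:ℂ)^2 + (v.2:ℂ)^2))
      = ((π/σ : ℝ) : ℂ) * ((rexp (-((z.1^2 + z.2^2)) / (4*σ)) : ℝ) : ℂ) := by
  have hsplit : ∀ v : ℝ × ℝ, Complex.exp (Complex.I * ((v.1:ℂ) * z.1 + (v.2:ℂ) * z.2)
        + -(σ:ℂ) * ((v.1:ℂ)^2 + (v.2:ℂ)^2))
      = Complex.exp (-(σ:ℂ) * (v.1:ℂ)^2 + (Complex.I * z.1) * v.1 + 0)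
        * Complex.exp (-(σ:ℂ) * (v.2:ℂ)^2 + (Complex.I * z.2) * v.2 + 0) := by
    intro v
    rw [← Complex.exp_add]
    congr 1
    ring
  simp_rw [hsplit]
  rw [show (volume : Measure (ℝ × ℝ)) = (volume : Measure ℝ).prod volume
      from Measure.volume_eq_prod ℝ ℝ]
  rw [show (∫ v : ℝ × ℝ, Complex.exp (-(σ:ℂ) * (v.1:ℂ)^2 + (Complex.I * z.1) * v.1 + 0)
        * Complex.exp (-(σ:ℂ) * (v.2:ℂ)^2 + (Complex.I * z.2) * v.2 + 0)
        ∂(volume : Measure ℝ).prod volume)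
      = (∫ a : ℝ, Complex.exp (-(σ:ℂ) * (a:ℂ)^2 + (Complex.I * z.1) * a + 0))
        * (∫ a : ℝ, Complex.exp (-(σ:ℂ) * (a:ℂ)^2 + (Complex.I * z.2) * a + 0))
      from MeasureTheory.integral_prod_mul
        (fun a : ℝ => Complex.exp (-(σ:ℂ) * (a:ℂ)^2 + (Complex.I * z.1) * a + 0))
        (fun a : ℝ => Complex.exp (-(σ:ℂ) * (a:ℂ)^2 + (Complex.I * z.2) * a + 0))]
  rw [gauss1 hσ z.1, gauss1 hσ z.2]
  have hz : ((π/σ : ℝ) : ℂ) ≠ 0 := by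
    have : (0:ℝ) < π/σ := div_pos pi_pos hσ
    exact_mod_cast this.ne'
  have hhalf : ((π/σ : ℝ) : ℂ) ^ (1/2 : ℂ) * ((π/σ : ℝ) : ℂ) ^ (1/2 : ℂ) = ((π/σ : ℝ) : ℂ) := by
    rw [← Complex.cpow_add _ _ hz]
    norm_num
  calc (((π/σ : ℝ) : ℂ) ^ (1/2 : ℂ) * Complex.exp (-((z.1:ℂ)^2 / (4*σ))))
        * (((π/σ : ℝ) : ℂ) ^ (1/2 : ℂ) * Complex.exp (-((z.2:ℂ)^2 / (4*σ))))
      = (((π/σ : ℝ) : ℂ) ^ (1/2 : ℂ) * ((π/σ : ℝ) : ℂ) ^ (1/2 : ℂ))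
        * (Complex.exp (-((z.1:ℂ)^2 / (4*σ))) * Complex.exp (-((z.2:ℂ)^2 / (4*σ)))) := by ring
    _ = ((π/σ : ℝ) : ℂ) * ((rexp (-((z.1^2 + z.2^2)) / (4*σ)) : ℝ) : ℂ) := by
        rw [hhalf, ← Complex.exp_add]
        congr 1
        rw [show (-((z.1^2 + z.2^2)) / (4*σ) : ℝ) = -(z.1^2/(4*σ)) + -(z.2^2/(4*σ)) by ring]
        push_cast
        ring

lemma integrable_gauss2 {σ : ℝ} (hσ : 0 < σ) :
    Integrable (fun v : ℝ × ℝ => rexp (-σ * (v.1^2 + v.2^2))) := by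
  have hsplit : ∀ v : ℝ × ℝ, rexp (-σ * (v.1^2 + v.2^2))
      = rexp (-σ * v.1^2) * rexp (-σ * v.2^2) := by
    intro v; rw [← Real.exp_add]; ring_nf
  simp_rw [hsplit]
  rw [show (volume : Measure (ℝ × ℝ)) = (volume : Measure ℝ).prod volume
      from Measure.volume_eq_prod ℝ ℝ]
  exact (integrable_exp_neg_mul_sq hσ).mul_prod (integrable_exp_neg_mul_sq hσ)

lemma integrable_gauss2' : Integrable (fun w : ℝ × ℝ => rexp (-(w.1^2 + w.2^2))) := by
  have := integrable_gauss2 (one_pos)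
  simpa using this

lemma integral_gauss2_one : ∫ w : ℝ × ℝ, rexp (-(w.1^2 + w.2^2)) = π := by
  have hsplit : ∀ v : ℝ × ℝ, rexp (-(v.1^2 + v.2^2))
      = rexp (-1 * v.1^2) * rexp (-1 * v.2^2) := by
    intro v; rw [← Real.exp_add]; ring_nf
  simp_rw [hsplit]
  rw [show (volume : Measure (ℝ × ℝ)) = (volume : Measure ℝ).prod volume
      from Measure.volume_eq_prod ℝ ℝ]
  rw [show (∫ w : ℝ × ℝ, rexp (-1 * w.1^2) * rexp (-1 * w.2^2)
        ∂(volume : Measure ℝ).prod volume)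
      = (∫ a : ℝ, rexp (-1 * a^2)) * (∫ a : ℝ, rexp (-1 * a^2))
      from MeasureTheory.integral_prod_mul (fun a : ℝ => rexp (-1 * a^2))
        (fun a : ℝ => rexp (-1 * a^2)), integral_gaussian]
  rw [show (π / 1 : ℝ) = π by ring]
  exact Real.mul_self_sqrt pi_pos.le

/-- smoothed version of `g`. -/
def W (ε₁ ε₂ σ : ℝ) (x : ℝ × ℝ) : ℝ :=
  ∫ w : ℝ × ℝ, g ε₁ ε₂ (x - (2 * Real.sqrt σ) • w) * rexp (-(w.1^2 + w.2^2))

lemma integrable_W_integrand {ε₁ ε₂ : ℝ} (h₂ : 0 < ε₂) (h : ε₁ + ε₂ < -1) (c : ℝ) (x : ℝ × ℝ) :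
    Integrable (fun w : ℝ × ℝ => g ε₁ ε₂ (x - c • w) * rexp (-(w.1^2 + w.2^2))) := by
  refine integrable_gauss2'.mono' (Continuous.aestronglyMeasurable (by
    exact ((continuous_g ε₁ ε₂).comp (continuous_const.sub (by fun_prop : Continuous fun w : ℝ × ℝ => c • w))).mul
      (by fun_prop : Continuous fun w : ℝ × ℝ => rexp (-(w.1^2 + w.2^2))))) ?_
  filter_upwards with w
  rw [norm_mul, norm_of_nonneg (g_nonneg _ _ _), norm_of_nonneg (exp_pos _).le]
  have h1 := g_le_one h₂ h (x - c • w)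
  nlinarith [exp_pos (-(w.1^2 + w.2^2)), g_nonneg ε₁ ε₂ (x - c • w)]

lemma W_nonneg (ε₁ ε₂ σ : ℝ) (x : ℝ × ℝ) : 0 ≤ W ε₁ ε₂ σ x :=
  integral_nonneg fun w => mul_nonneg (g_nonneg _ _ _) (exp_pos _).le

lemma W_le_pi {ε₁ ε₂ : ℝ} (h₂ : 0 < ε₂) (h : ε₁ + ε₂ < -1) (σ : ℝ) (x : ℝ × ℝ) :
    W ε₁ ε₂ σ x ≤ π := by
  have h1 : W ε₁ ε₂ σ x ≤ ∫ w : ℝ × ℝ, rexp (-(w.1^2 + w.2^2)) := by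
    refine integral_mono (integrable_W_integrand h₂ h _ x) integrable_gauss2' ?_
    intro w
    dsimp only
    have := g_le_one h₂ h (x - (2 * Real.sqrt σ) • w)
    have := exp_pos (-(w.1^2 + w.2^2))
    have := g_nonneg ε₁ ε₂ (x - (2 * Real.sqrt σ) • w)
    nlinarith
  rwa [integral_gauss2_one] at h1

lemma continuous_W {ε₁ ε₂ : ℝ} (h₂ : 0 < ε₂) (h : ε₁ + ε₂ < -1) (σ : ℝ) :
    Continuous (W ε₁ ε₂ σ) := by
  refine MeasureTheory.continuous_of_dominated (bound := fun w : ℝ × ℝ => rexp (-(w.1^2 + w.2^2)))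
    (fun x => Continuous.aestronglyMeasurable (by
      exact ((continuous_g ε₁ ε₂).comp (continuous_const.sub (by fun_prop : Continuous fun w : ℝ × ℝ => (2 * Real.sqrt σ) • w))).mul
        (by fun_prop : Continuous fun w : ℝ × ℝ => rexp (-(w.1^2 + w.2^2))))) (fun x => ?_) integrable_gauss2' ?_
  · filter_upwards with w
    rw [norm_mul, norm_of_nonneg (g_nonneg _ _ _), norm_of_nonneg (exp_pos _).le]
    have h1 := g_le_one h₂ h (x - (2 * Real.sqrt σ) • w)
    nlinarith [exp_pos (-(w.1^2 + w.2^2)), g_nonneg ε₁ ε₂ (x - (2 * Real.sqrt σ) • w)]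
  · filter_upwards with w
    exact ((continuous_g ε₁ ε₂).comp (continuous_id.sub continuous_const)).mul continuous_const

lemma tendsto_W {ε₁ ε₂ : ℝ} (h₂ : 0 < ε₂) (h : ε₁ + ε₂ < -1) (x : ℝ × ℝ) :
    Tendsto (fun σ => W ε₁ ε₂ σ x) (𝓝[>] (0:ℝ)) (𝓝 (g ε₁ ε₂ x * π)) := by
  have hlim : ∀ w : ℝ × ℝ, Tendsto (fun σ : ℝ => g ε₁ ε₂ (x - (2 * Real.sqrt σ) • w)
      * rexp (-(w.1^2 + w.2^2))) (𝓝[>] (0:ℝ)) (𝓝 (g ε₁ ε₂ x * rexp (-(w.1^2 + w.2^2)))) := by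
    intro w
    have hc : Continuous fun σ : ℝ => g ε₁ ε₂ (x - (2 * Real.sqrt σ) • w)
        * rexp (-(w.1^2 + w.2^2)) := by
      refine Continuous.mul ?_ continuous_const
      exact (continuous_g ε₁ ε₂).comp
        (continuous_const.sub ((continuous_const.mul Real.continuous_sqrt).smul continuous_const))
    have h0 : g ε₁ ε₂ (x - (2 * Real.sqrt 0) • w) * rexp (-(w.1^2 + w.2^2))
        = g ε₁ ε₂ x * rexp (-(w.1^2 + w.2^2)) := by
      simp
    have := hc.tendsto 0
    rw [h0] at this
    exact this.mono_left nhdsWithin_le_nhds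
  have : Tendsto (fun σ => W ε₁ ε₂ σ x) (𝓝[>] (0:ℝ))
      (𝓝 (∫ w : ℝ × ℝ, g ε₁ ε₂ x * rexp (-(w.1^2 + w.2^2)))) := by
    refine MeasureTheory.tendsto_integral_filter_of_dominated_convergence
      (fun w : ℝ × ℝ => rexp (-(w.1^2 + w.2^2))) ?_ ?_ integrable_gauss2' ?_
    · filter_upwards with σ
      exact Continuous.aestronglyMeasurable (by
        exact ((continuous_g ε₁ ε₂).comp (continuous_const.sub (by fun_prop : Continuous fun w : ℝ × ℝ => (2 * Real.sqrt σ) • w))).mul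
          (by fun_prop : Continuous fun w : ℝ × ℝ => rexp (-(w.1^2 + w.2^2))))
    · filter_upwards with σ
      filter_upwards with w
      rw [norm_mul, norm_of_nonneg (g_nonneg _ _ _), norm_of_nonneg (exp_pos _).le]
      have h1 := g_le_one h₂ h (x - (2 * Real.sqrt σ) • w)
      nlinarith [exp_pos (-(w.1^2 + w.2^2)), g_nonneg ε₁ ε₂ (x - (2 * Real.sqrt σ) • w)]
    · filter_upwards with w using hlim w
  rwa [MeasureTheory.integral_const_mul, integral_gauss2_one] at this

/-- Change of variables for the heat kernel convolution. -/
lemma conv_scale {ε₁ ε₂ σ : ℝ} (hσ : 0 < σ) (x : ℝ × ℝ) :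
    ∫ y : ℝ × ℝ, g ε₁ ε₂ y * rexp (-((x.1 - y.1)^2 + (x.2 - y.2)^2) / (4*σ))
      = (4*σ) * W ε₁ ε₂ σ x := by
  set c : ℝ := 2 * Real.sqrt σ with hc
  have hc2 : c^2 = 4*σ := by
    rw [hc, mul_pow, Real.sq_sqrt hσ.le]; ring
  have hcpos : 0 < c := by positivity
  set h : ℝ × ℝ → ℝ := fun z => g ε₁ ε₂ (x - z) * rexp (-(z.1^2 + z.2^2) / (4*σ)) with hh
  have step1 : ∫ y : ℝ × ℝ, g ε₁ ε₂ y * rexp (-((x.1 - y.1)^2 + (x.2 - y.2)^2) / (4*σ))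
      = ∫ y : ℝ × ℝ, h (x - y) := by
    congr 1
    funext y
    rw [hh]
    simp [sub_sub_cancel]
  have step2 : ∫ y : ℝ × ℝ, h (x - y) = ∫ z : ℝ × ℝ, h z := by
    have e1 : ∀ y : ℝ × ℝ, h (x - y) = (fun z => h (x + z)) ((-1 : ℝ) • y) := by
      intro y; simp [sub_eq_add_neg]
    simp_rw [e1]
    rw [MeasureTheory.Measure.integral_comp_smul volume (fun z => h (x + z)) (-1)]
    rw [MeasureTheory.integral_add_left_eq_self (fun z => h z) x]
    norm_num
  have step3 : ∫ z : ℝ × ℝ, h z = (4*σ) * ∫ w : ℝ × ℝ, h (c • w) := by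
    rw [MeasureTheory.Measure.integral_comp_smul volume h c]
    rw [show Module.finrank ℝ (ℝ × ℝ) = 2 by simp]
    rw [abs_of_pos (by positivity : (0:ℝ) < ((c^2)⁻¹ : ℝ))]
    rw [smul_eq_mul, ← mul_assoc, hc2]
    field_simp
  have step4 : ∀ w : ℝ × ℝ, h (c • w) = g ε₁ ε₂ (x - c • w) * rexp (-(w.1^2 + w.2^2)) := by
    intro w
    simp only [hh]
    congr 1
    have : (c • w).1 ^ 2 + (c • w).2 ^ 2 = c^2 * (w.1^2 + w.2^2) := by
      simp [Prod.smul_fst, Prod.smul_snd, smul_eq_mul]; ring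
    rw [this, hc2]
    congr 1
    field_simp
  rw [step1, step2, step3]
  congr 1
  exact congrArg _ (funext step4)


section Main

lemma continuous_Pf {ε₁ ε₂ : ℝ} (h₂ : 0 < ε₂) (hε : ε₁ + ε₂ < -1) :
    Continuous (Pf ε₁ ε₂) := by
  have hG : ∀ (c : ℝ × ℝ → ℂ), Continuous c → (∀ v, 0 < (c v).re) →
      Continuous fun v => Complex.Gamma (c v) := by
    intro c hc hre
    rw [continuous_iff_continuousAt]
    intro v
    refine (Complex.differentiableAt_Gamma _ fun m => ?_).continuousAt.comp hc.continuousAt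
    intro hcv
    have := hre v
    rw [hcv] at this
    simp at this
    have : (0:ℝ) ≤ (m:ℝ) := Nat.cast_nonneg m
    linarith
  have hre1 : ∀ v : ℝ × ℝ, 0 < (Complex.I * (((v.1 : ℂ) + Complex.I * (ε₁ : ℂ))
      + ((v.2 : ℂ) + Complex.I * (ε₂ : ℂ))) - 1).re := by
    intro v; simp [Complex.mul_re, Complex.add_im]; linarith
  have hre2 : ∀ v : ℝ × ℝ, 0 < (-Complex.I * ((v.2 : ℂ) + Complex.I * (ε₂ : ℂ))).re := by
    intro v; simp [Complex.mul_re]; linarith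
  have hre3 : ∀ v : ℝ × ℝ, 0 < (Complex.I * ((v.1 : ℂ) + Complex.I * (ε₁ : ℂ)) + 1).re := by
    intro v; simp [Complex.mul_re]; linarith
  have hd : ∀ v : ℝ × ℝ, Complex.Gamma (Complex.I * ((v.1 : ℂ) + Complex.I * (ε₁ : ℂ)) + 1) ≠ 0 :=
    fun v => Gamma_ne_zero_of_re_pos (hre3 v)
  exact ((hG _ (by fun_prop) hre1).mul (hG _ (by fun_prop) hre2)).div
    (hG _ (by fun_prop) hre3) hd

lemma norm_Pf_le {ε₁ ε₂ : ℝ} (h₂ : 0 < ε₂) (hε : ε₁ + ε₂ < -1) (v : ℝ × ℝ) :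
    ‖Pf ε₁ ε₂ v‖ ≤ ∫ x : ℝ × ℝ, g ε₁ ε₂ x := by
  rw [← transform h₂ hε v]
  refine (norm_integral_le_integral_norm _).trans ?_
  refine le_of_eq (integral_congr_ae ?_)
  filter_upwards with x
  rw [norm_mul, Complex.norm_exp]
  have h0 : (-(Complex.I * ((v.1 : ℂ) * x.1 + (v.2 : ℂ) * x.2))).re = 0 := by
    simp [Complex.mul_re]
  rw [h0, Real.exp_zero, one_mul, Complex.norm_real, Real.norm_eq_abs,
    _root_.abs_of_nonneg (g_nonneg _ _ _)]

def Φfn (μ : Measure (ℝ × ℝ)) (ε₁ ε₂ : ℝ) (v : ℝ × ℝ) : ℂ :=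
  ∫ x : ℝ × ℝ, Complex.exp (Complex.I *
    (((v.1 : ℂ) + Complex.I * (ε₁ : ℂ)) * (x.1 : ℂ) +
      ((v.2 : ℂ) + Complex.I * (ε₂ : ℂ)) * (x.2 : ℂ))) ∂μ

theorem spread_main (μ : Measure (ℝ × ℝ)) [IsProbabilityMeasure μ]
    (ε₁ ε₂ : ℝ) (hε₂ : 0 < ε₂) (hε : ε₁ + ε₂ < -1)
    (h₁ : Integrable (fun x : ℝ × ℝ => Real.exp (-ε₁ * x.1 - ε₂ * x.2)) μ)
    (h₂ : Integrable (fun x : ℝ × ℝ => max (Real.exp x.1 - Real.exp x.2 - 1) 0) μ)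
    (h₃ : Integrable (fun v : ℝ × ℝ => Φfn μ ε₁ ε₂ v * Pf ε₁ ε₂ v)
      (volume : Measure (ℝ × ℝ))) :
    ((∫ x : ℝ × ℝ, max (Real.exp x.1 - Real.exp x.2 - 1) 0 ∂μ : ℝ) : ℂ) =
      ((2 * Real.pi : ℂ) ^ 2)⁻¹ * ∫ v : ℝ × ℝ, Φfn μ ε₁ ε₂ v * Pf ε₁ ε₂ v := by
  have hgi := integrable_g hε₂ hε
  have hPfc := continuous_Pf hε₂ hε
  have hPfb := norm_Pf_le hε₂ hε
  set C₀ : ℝ := ∫ x : ℝ × ℝ, g ε₁ ε₂ x with hC₀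
  have hC₀0 : 0 ≤ C₀ := integral_nonneg (g_nonneg ε₁ ε₂)
  -- norm of the oscillating factor
  have hEnorm : ∀ v x : ℝ × ℝ, ‖Complex.exp (Complex.I *
      (((v.1 : ℂ) + Complex.I * (ε₁ : ℂ)) * (x.1 : ℂ) +
        ((v.2 : ℂ) + Complex.I * (ε₂ : ℂ)) * (x.2 : ℂ)))‖
      = Real.exp (-ε₁ * x.1 - ε₂ * x.2) := by
    intro v x
    rw [Complex.norm_exp]
    congr 1
    simp [Complex.mul_re, Complex.mul_im, Complex.add_re, Complex.add_im]
    ring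
  have hEsplit : ∀ v x : ℝ × ℝ, Complex.exp (Complex.I *
      (((v.1 : ℂ) + Complex.I * (ε₁ : ℂ)) * (x.1 : ℂ) +
        ((v.2 : ℂ) + Complex.I * (ε₂ : ℂ)) * (x.2 : ℂ)))
      = Complex.exp (Complex.I * ((v.1:ℂ) * x.1 + (v.2:ℂ) * x.2))
        * ((Real.exp (-ε₁ * x.1 - ε₂ * x.2) : ℝ) : ℂ) := by
    intro v x
    rw [Complex.ofReal_exp, ← Complex.exp_add]
    congr 1
    push_cast
    linear_combination ((ε₁:ℂ) * x.1 + (ε₂:ℂ) * x.2) * Complex.I_sq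
  set Sfun : ℝ → ℂ := fun σ =>
    ∫ v : ℝ × ℝ, ((rexp (-σ * (v.1^2 + v.2^2)) : ℝ) : ℂ) * (Φfn μ ε₁ ε₂ v * Pf ε₁ ε₂ v)
    with hSfun
  -- Step A
  have stepA : Tendsto Sfun (𝓝[>] (0:ℝ)) (𝓝 (∫ v : ℝ × ℝ, Φfn μ ε₁ ε₂ v * Pf ε₁ ε₂ v)) := by
    refine tendsto_integral_filter_of_dominated_convergence
      (fun v => ‖Φfn μ ε₁ ε₂ v * Pf ε₁ ε₂ v‖) ?_ ?_ h₃.norm ?_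
    · filter_upwards with σ
      exact (Complex.continuous_ofReal.comp (by fun_prop)).aestronglyMeasurable.mul
        h₃.aestronglyMeasurable
    · filter_upwards [self_mem_nhdsWithin] with σ hσ
      filter_upwards with v
      rw [norm_mul]
      have h1 : ‖((rexp (-σ * (v.1^2 + v.2^2)) : ℝ) : ℂ)‖ ≤ 1 := by
        rw [Complex.norm_real, Real.norm_eq_abs, abs_of_pos (exp_pos _)]
        rw [Real.exp_le_one_iff]
        have : (0:ℝ) < σ := hσ
        nlinarith [sq_nonneg v.1, sq_nonneg v.2]
      exact mul_le_of_le_one_left (norm_nonneg _) h1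
    · filter_upwards with v
      have hc : Continuous fun σ : ℝ => ((rexp (-σ * (v.1^2 + v.2^2)) : ℝ) : ℂ) := by fun_prop
      have h0 := (hc.tendsto 0).mono_left (nhdsWithin_le_nhds (s := Ioi (0:ℝ)))
      have h0' := h0.mul_const (Φfn μ ε₁ ε₂ v * Pf ε₁ ε₂ v)
      simpa using h0'
  -- key identity for σ > 0
  have key : ∀ σ : ℝ, 0 < σ → Sfun σ
      = ((4 * π : ℝ) : ℂ) * ((∫ x : ℝ × ℝ, Real.exp (-ε₁ * x.1 - ε₂ * x.2) * W ε₁ ε₂ σ x ∂μ : ℝ) : ℂ) := by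
    intro σ hσ
    have hσC : (-(σ:ℂ)).re < 0 := by simpa using hσ
    -- step 1: pull the Gaussian and Pf inside the μ-integral
    have h1 : ∀ v : ℝ × ℝ, ((rexp (-σ * (v.1^2 + v.2^2)) : ℝ) : ℂ) * (Φfn μ ε₁ ε₂ v * Pf ε₁ ε₂ v)
        = ∫ x : ℝ × ℝ, (((rexp (-σ * (v.1^2 + v.2^2)) : ℝ) : ℂ) * Pf ε₁ ε₂ v) *
            Complex.exp (Complex.I *
              (((v.1 : ℂ) + Complex.I * (ε₁ : ℂ)) * (x.1 : ℂ) +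
                ((v.2 : ℂ) + Complex.I * (ε₂ : ℂ)) * (x.2 : ℂ))) ∂μ := by
      intro v
      rw [MeasureTheory.integral_const_mul]
      simp only [Φfn]
      ring
    rw [hSfun]
    simp only [h1]
    -- step 2: Fubini swap
    have hFub : Integrable (Function.uncurry fun (v x : ℝ × ℝ) =>
        (((rexp (-σ * (v.1^2 + v.2^2)) : ℝ) : ℂ) * Pf ε₁ ε₂ v) *
          Complex.exp (Complex.I *
            (((v.1 : ℂ) + Complex.I * (ε₁ : ℂ)) * (x.1 : ℂ) +
              ((v.2 : ℂ) + Complex.I * (ε₂ : ℂ)) * (x.2 : ℂ))))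
        ((volume : Measure (ℝ × ℝ)).prod μ) := by
      have hbound : Integrable (fun p : (ℝ × ℝ) × (ℝ × ℝ) =>
          (C₀ * rexp (-σ * (p.1.1^2 + p.1.2^2))) * Real.exp (-ε₁ * p.2.1 - ε₂ * p.2.2))
          ((volume : Measure (ℝ × ℝ)).prod μ) :=
        ((integrable_gauss2 hσ).const_mul C₀).mul_prod h₁
      refine hbound.mono' ?_ ?_
      · apply Continuous.aestronglyMeasurable
        apply Continuous.mul
        · exact ((Complex.continuous_ofReal.comp (by fun_prop)).mul
            (hPfc.comp continuous_fst))
        · exact Complex.continuous_exp.comp (by fun_prop)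
      · filter_upwards with p
        simp only [Function.uncurry]
        rw [norm_mul, norm_mul, hEnorm, Complex.norm_real, Real.norm_eq_abs,
          abs_of_pos (exp_pos _)]
        have hb1 : ‖Pf ε₁ ε₂ p.1‖ ≤ C₀ := hPfb p.1
        have he1 := (exp_pos (-σ * (p.1.1^2 + p.1.2^2))).le
        have he2 := (exp_pos (-ε₁ * p.2.1 - ε₂ * p.2.2)).le
        have hmono := mul_le_mul_of_nonneg_right (mul_le_mul_of_nonneg_left hb1 he1) he2
        exact hmono.trans_eq (by ring)
    rw [MeasureTheory.integral_integral_swap hFub]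
    -- step 3: inner v-integral equals the smoothed kernel
    have h3 : ∀ x : ℝ × ℝ, (∫ v : ℝ × ℝ,
        (((rexp (-σ * (v.1^2 + v.2^2)) : ℝ) : ℂ) * Pf ε₁ ε₂ v) *
          Complex.exp (Complex.I *
            (((v.1 : ℂ) + Complex.I * (ε₁ : ℂ)) * (x.1 : ℂ) +
              ((v.2 : ℂ) + Complex.I * (ε₂ : ℂ)) * (x.2 : ℂ))))
        = ((4 * π : ℝ) : ℂ) *
            ((Real.exp (-ε₁ * x.1 - ε₂ * x.2) * W ε₁ ε₂ σ x : ℝ) : ℂ) := by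
      intro x
      -- expand Pf as the transform of g
      have e1 : ∀ v : ℝ × ℝ,
          (((rexp (-σ * (v.1^2 + v.2^2)) : ℝ) : ℂ) * Pf ε₁ ε₂ v) *
            Complex.exp (Complex.I *
              (((v.1 : ℂ) + Complex.I * (ε₁ : ℂ)) * (x.1 : ℂ) +
                ((v.2 : ℂ) + Complex.I * (ε₂ : ℂ)) * (x.2 : ℂ)))
          = ∫ y : ℝ × ℝ,
              (((rexp (-σ * (v.1^2 + v.2^2)) : ℝ) : ℂ) *
                (Complex.exp (-(Complex.I * ((v.1 : ℂ) * y.1 + (v.2 : ℂ) * y.2)))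
                  * (g ε₁ ε₂ y : ℂ))) *
              Complex.exp (Complex.I *
                (((v.1 : ℂ) + Complex.I * (ε₁ : ℂ)) * (x.1 : ℂ) +
                  ((v.2 : ℂ) + Complex.I * (ε₂ : ℂ)) * (x.2 : ℂ))) := by
        intro v
        rw [← transform hε₂ hε v, ← MeasureTheory.integral_const_mul,
          ← MeasureTheory.integral_mul_const]
      simp only [e1]
      have hFub2 : Integrable (Function.uncurry fun (v y : ℝ × ℝ) =>
          (((rexp (-σ * (v.1^2 + v.2^2)) : ℝ) : ℂ) *
            (Complex.exp (-(Complex.I * ((v.1 : ℂ) * y.1 + (v.2 : ℂ) * y.2)))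
              * (g ε₁ ε₂ y : ℂ))) *
            Complex.exp (Complex.I *
              (((v.1 : ℂ) + Complex.I * (ε₁ : ℂ)) * (x.1 : ℂ) +
                ((v.2 : ℂ) + Complex.I * (ε₂ : ℂ)) * (x.2 : ℂ))))
          ((volume : Measure (ℝ × ℝ)).prod (volume : Measure (ℝ × ℝ))) := by
        have hbound2 : Integrable (fun p : (ℝ × ℝ) × (ℝ × ℝ) =>
            (Real.exp (-ε₁ * x.1 - ε₂ * x.2) * rexp (-σ * (p.1.1^2 + p.1.2^2)))
              * g ε₁ ε₂ p.2)
            ((volume : Measure (ℝ × ℝ)).prod (volume : Measure (ℝ × ℝ))) :=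
          ((integrable_gauss2 hσ).const_mul _).mul_prod hgi
        refine hbound2.mono' ?_ ?_
        · apply Continuous.aestronglyMeasurable
          apply Continuous.mul
          · refine Continuous.mul (Complex.continuous_ofReal.comp (by fun_prop)) ?_
            refine Continuous.mul (Complex.continuous_exp.comp (by fun_prop)) ?_
            exact Complex.continuous_ofReal.comp ((continuous_g ε₁ ε₂).comp continuous_snd)
          · exact Complex.continuous_exp.comp (by fun_prop)
        · filter_upwards with p
          simp only [Function.uncurry]
          rw [norm_mul, norm_mul, norm_mul, hEnorm, Complex.norm_real, Real.norm_eq_abs,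
            abs_of_pos (exp_pos _)]
          have hosc : ‖Complex.exp (-(Complex.I * ((p.1.1 : ℂ) * p.2.1 + (p.1.2 : ℂ) * p.2.2)))‖
              = 1 := by
            rw [Complex.norm_exp]
            have : (-(Complex.I * ((p.1.1 : ℂ) * p.2.1 + (p.1.2 : ℂ) * p.2.2))).re = 0 := by
              simp [Complex.mul_re]
            rw [this, Real.exp_zero]
          rw [hosc, one_mul, Complex.norm_real, Real.norm_eq_abs,
            _root_.abs_of_nonneg (g_nonneg _ _ _)]
          have he2 := (exp_pos (-ε₁ * x.1 - ε₂ * x.2)).le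
          have he1 := (exp_pos (-σ * (p.1.1^2 + p.1.2^2))).le
          have hg0 := g_nonneg ε₁ ε₂ p.2
          nlinarith
      rw [MeasureTheory.integral_integral_swap hFub2]
      -- inner v-Gaussian integral for fixed y
      have e2 : ∀ y : ℝ × ℝ, (∫ v : ℝ × ℝ,
          (((rexp (-σ * (v.1^2 + v.2^2)) : ℝ) : ℂ) *
            (Complex.exp (-(Complex.I * ((v.1 : ℂ) * y.1 + (v.2 : ℂ) * y.2)))
              * (g ε₁ ε₂ y : ℂ))) *
            Complex.exp (Complex.I *
              (((v.1 : ℂ) + Complex.I * (ε₁ : ℂ)) * (x.1 : ℂ) +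
                ((v.2 : ℂ) + Complex.I * (ε₂ : ℂ)) * (x.2 : ℂ))))
          = (((Real.exp (-ε₁ * x.1 - ε₂ * x.2) * (π/σ)) : ℝ) : ℂ) *
              ((g ε₁ ε₂ y * rexp (-((x.1 - y.1)^2 + (x.2 - y.2)^2) / (4*σ)) : ℝ) : ℂ) := by
        intro y
        have e2pt : ∀ v : ℝ × ℝ,
            (((rexp (-σ * (v.1^2 + v.2^2)) : ℝ) : ℂ) *
              (Complex.exp (-(Complex.I * ((v.1 : ℂ) * y.1 + (v.2 : ℂ) * y.2)))
                * (g ε₁ ε₂ y : ℂ))) *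
              Complex.exp (Complex.I *
                (((v.1 : ℂ) + Complex.I * (ε₁ : ℂ)) * (x.1 : ℂ) +
                  ((v.2 : ℂ) + Complex.I * (ε₂ : ℂ)) * (x.2 : ℂ)))
            = (((Real.exp (-ε₁ * x.1 - ε₂ * x.2) : ℝ)) : ℂ) * ((g ε₁ ε₂ y : ℝ) : ℂ) *
                Complex.exp (Complex.I * ((v.1:ℂ) * ((x.1 - y.1 : ℝ) : ℂ)
                    + (v.2:ℂ) * ((x.2 - y.2 : ℝ) : ℂ))
                  + -(σ:ℂ) * ((v.1:ℂ)^2 + (v.2:ℂ)^2)) := by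
          intro v
          rw [hEsplit v x, Complex.ofReal_exp (-σ * (v.1^2 + v.2^2))]
          calc Complex.exp ((-σ * (v.1^2 + v.2^2) : ℝ) : ℂ) *
              (Complex.exp (-(Complex.I * ((v.1 : ℂ) * y.1 + (v.2 : ℂ) * y.2)))
                * (g ε₁ ε₂ y : ℂ)) *
              (Complex.exp (Complex.I * ((v.1:ℂ) * x.1 + (v.2:ℂ) * x.2))
                * ((Real.exp (-ε₁ * x.1 - ε₂ * x.2) : ℝ) : ℂ))
              = ((Real.exp (-ε₁ * x.1 - ε₂ * x.2) : ℝ) : ℂ) * ((g ε₁ ε₂ y : ℝ) : ℂ) *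
                (Complex.exp ((-σ * (v.1^2 + v.2^2) : ℝ) : ℂ) *
                  Complex.exp (-(Complex.I * ((v.1 : ℂ) * y.1 + (v.2 : ℂ) * y.2))) *
                  Complex.exp (Complex.I * ((v.1:ℂ) * x.1 + (v.2:ℂ) * x.2))) := by ring
            _ = (((Real.exp (-ε₁ * x.1 - ε₂ * x.2) : ℝ)) : ℂ) * ((g ε₁ ε₂ y : ℝ) : ℂ) *
                Complex.exp (Complex.I * ((v.1:ℂ) * ((x.1 - y.1 : ℝ) : ℂ)
                    + (v.2:ℂ) * ((x.2 - y.2 : ℝ) : ℂ))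
                  + -(σ:ℂ) * ((v.1:ℂ)^2 + (v.2:ℂ)^2)) := by
                rw [← Complex.exp_add, ← Complex.exp_add]
                congr 2
                push_cast
                ring
        simp only [e2pt]
        rw [MeasureTheory.integral_const_mul]
        have hg2 := gauss2 hσ (x - y)
        have hg2' : (∫ v : ℝ × ℝ, Complex.exp (Complex.I * ((v.1:ℂ) * ((x.1 - y.1 : ℝ) : ℂ)
              + (v.2:ℂ) * ((x.2 - y.2 : ℝ) : ℂ)) + -(σ:ℂ) * ((v.1:ℂ)^2 + (v.2:ℂ)^2)))
            = ((π/σ : ℝ) : ℂ) *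
              ((rexp (-(((x.1 - y.1)^2 + (x.2 - y.2)^2)) / (4*σ)) : ℝ) : ℂ) := by
          simpa [Prod.fst_sub, Prod.snd_sub] using hg2
        rw [hg2']
        push_cast
        ring
      simp only [e2]
      rw [MeasureTheory.integral_const_mul]
      rw [show (∫ y : ℝ × ℝ,
            ((g ε₁ ε₂ y * rexp (-((x.1 - y.1)^2 + (x.2 - y.2)^2) / (4*σ)) : ℝ) : ℂ))
          = ((∫ y : ℝ × ℝ, g ε₁ ε₂ y * rexp (-((x.1 - y.1)^2 + (x.2 - y.2)^2) / (4*σ)) : ℝ) : ℂ)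
          from integral_ofReal]
      rw [conv_scale hσ x]
      push_cast
      have hσ0 : (σ:ℂ) ≠ 0 := by exact_mod_cast hσ.ne'
      field_simp
    simp only [h3]
    rw [MeasureTheory.integral_const_mul]
    congr 1
    exact integral_ofReal
  -- Step E: limit of the smoothed payoff integrals
  have stepE : Tendsto (fun σ => ∫ x : ℝ × ℝ, Real.exp (-ε₁ * x.1 - ε₂ * x.2) * W ε₁ ε₂ σ x ∂μ)
      (𝓝[>] (0:ℝ)) (𝓝 (π * ∫ x : ℝ × ℝ, max (Real.exp x.1 - Real.exp x.2 - 1) 0 ∂μ)) := by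
    have htarget : π * ∫ x : ℝ × ℝ, max (Real.exp x.1 - Real.exp x.2 - 1) 0 ∂μ
        = ∫ x : ℝ × ℝ, π * max (Real.exp x.1 - Real.exp x.2 - 1) 0 ∂μ :=
      (MeasureTheory.integral_const_mul π _).symm
    rw [htarget]
    refine tendsto_integral_filter_of_dominated_convergence
      (fun x => Real.exp (-ε₁ * x.1 - ε₂ * x.2) * π) ?_ ?_ (h₁.mul_const π) ?_
    · filter_upwards with σ
      exact Continuous.aestronglyMeasurable
        ((by fun_prop : Continuous fun x : ℝ × ℝ => Real.exp (-ε₁ * x.1 - ε₂ * x.2)).mul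
          (continuous_W hε₂ hε σ))
    · filter_upwards with σ
      filter_upwards with x
      rw [norm_of_nonneg (mul_nonneg (exp_pos _).le (W_nonneg _ _ _ _))]
      exact mul_le_mul_of_nonneg_left (W_le_pi hε₂ hε σ x) (exp_pos _).le
    · filter_upwards with x
      have hT := (tendsto_W hε₂ hε x).const_mul (Real.exp (-ε₁ * x.1 - ε₂ * x.2))
      have heq : Real.exp (-ε₁ * x.1 - ε₂ * x.2) * (g ε₁ ε₂ x * π)
          = π * max (Real.exp x.1 - Real.exp x.2 - 1) 0 := by
        have h00 : rexp (-ε₁ * x.1 - ε₂ * x.2) * rexp (ε₁ * x.1 + ε₂ * x.2) = 1 := by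
          rw [← Real.exp_add, show (-ε₁ * x.1 - ε₂ * x.2) + (ε₁ * x.1 + ε₂ * x.2) = 0 by ring,
            Real.exp_zero]
        simp only [g, pay]
        linear_combination (max (rexp x.1 - rexp x.2 - 1) 0 * π) * h00
      rw [heq] at hT
      exact hT
  -- assemble
  have stepE' : Tendsto (fun σ : ℝ => ((4 * π : ℝ) : ℂ) *
      ((∫ x : ℝ × ℝ, Real.exp (-ε₁ * x.1 - ε₂ * x.2) * W ε₁ ε₂ σ x ∂μ : ℝ) : ℂ))
      (𝓝[>] (0:ℝ)) (𝓝 (((4 * π : ℝ) : ℂ) *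
        ((π * ∫ x : ℝ × ℝ, max (Real.exp x.1 - Real.exp x.2 - 1) 0 ∂μ : ℝ) : ℂ))) :=
    ((Complex.continuous_ofReal.tendsto _).comp stepE).const_mul _
  have hlim2 : Tendsto Sfun (𝓝[>] (0:ℝ)) (𝓝 (((4 * π : ℝ) : ℂ) *
      ((π * ∫ x : ℝ × ℝ, max (Real.exp x.1 - Real.exp x.2 - 1) 0 ∂μ : ℝ) : ℂ))) := by
    refine stepE'.congr' ?_
    filter_upwards [self_mem_nhdsWithin] with σ hσ
    exact (key σ hσ).symm
  have hval : (∫ v : ℝ × ℝ, Φfn μ ε₁ ε₂ v * Pf ε₁ ε₂ v)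
      = ((4 * π : ℝ) : ℂ) *
        ((π * ∫ x : ℝ × ℝ, max (Real.exp x.1 - Real.exp x.2 - 1) 0 ∂μ : ℝ) : ℂ) :=
    tendsto_nhds_unique stepA hlim2
  rw [hval]
  have hπ : ((π : ℝ) : ℂ) ≠ 0 := by exact_mod_cast Real.pi_ne_zero
  push_cast
  field_simp
  ring

end Main

end SpreadAux

section Statement
open MeasureTheory

/-- **Spread option pricing formula.** For a probability measure μ on ℝ² and ε₂ > 0,
ε₁ + ε₂ < -1, under the stated integrability hypotheses, the expectation of the spread
payoff equals `(2π)^{-2}` times the integral of the characteristic function `Φ` against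
`P̂` along the shifted contour. -/
theorem spread_option_price_formula
    (μ : Measure (ℝ × ℝ)) [IsProbabilityMeasure μ]
    (ε₁ ε₂ : ℝ) (hε₂ : 0 < ε₂) (hε : ε₁ + ε₂ < -1)
    (h₁ : Integrable (fun x : ℝ × ℝ => Real.exp (-ε₁ * x.1 - ε₂ * x.2)) μ)
    (h₂ : Integrable (fun x : ℝ × ℝ => max (Real.exp x.1 - Real.exp x.2 - 1) 0) μ)
    (h₃ : Integrable
      (fun v : ℝ × ℝ =>
        (∫ x : ℝ × ℝ,
            Complex.exp (Complex.I *
              (((v.1 : ℂ) + Complex.I * (ε₁ : ℂ)) * (x.1 : ℂ) +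
                ((v.2 : ℂ) + Complex.I * (ε₂ : ℂ)) * (x.2 : ℂ))) ∂μ) *
          (Complex.Gamma
              (Complex.I *
                  (((v.1 : ℂ) + Complex.I * (ε₁ : ℂ)) + ((v.2 : ℂ) + Complex.I * (ε₂ : ℂ))) - 1) *
            Complex.Gamma (-Complex.I * ((v.2 : ℂ) + Complex.I * (ε₂ : ℂ))) /
            Complex.Gamma (Complex.I * ((v.1 : ℂ) + Complex.I * (ε₁ : ℂ)) + 1)))
      (volume : Measure (ℝ × ℝ))) :
    ((∫ x : ℝ × ℝ, max (Real.exp x.1 - Real.exp x.2 - 1) 0 ∂μ : ℝ) : ℂ) =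
      ((2 * Real.pi : ℂ) ^ 2)⁻¹ *
        ∫ v : ℝ × ℝ,
          (∫ x : ℝ × ℝ,
              Complex.exp (Complex.I *
                (((v.1 : ℂ) + Complex.I * (ε₁ : ℂ)) * (x.1 : ℂ) +
                  ((v.2 : ℂ) + Complex.I * (ε₂ : ℂ)) * (x.2 : ℂ))) ∂μ) *
            (Complex.Gamma
                (Complex.I *
                    (((v.1 : ℂ) + Complex.I * (ε₁ : ℂ)) + ((v.2 : ℂ) + Complex.I * (ε₂ : ℂ))) - 1) *
              Complex.Gamma (-Complex.I * ((v.2 : ℂ) + Complex.I * (ε₂ : ℂ))) /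
              Complex.Gamma (Complex.I * ((v.1 : ℂ) + Complex.I * (ε₁ : ℂ)) + 1)) := by
  exact SpreadAux.spread_main μ ε₁ ε₂ hε₂ hε h₁ h₂ h₃

end Statement
end
end

section
/- Let ε = (ε₁, ε₂) be real numbers with ε₂ > 0 and ε₁ + ε₂ < -1. Then the function x = (x₁,x₂) ↦ e^{ε₁x₁ + ε₂x₂} · (e^{x₁} - e^{x₂} - 1)^+ is bounded on ℝ² and tends to 0 as ‖x‖ → ∞. -/
open MeasureTheory Filter

/-- For ε₂ > 0 and ε₁ + ε₂ < -1, the function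
`x ↦ e^{ε₁x₁ + ε₂x₂} · (e^{x₁} - e^{x₂} - 1)⁺` is bounded on ℝ² and tends to 0
as `‖x‖ → ∞`. -/
theorem spread_payoff_exp_weight_bounded_vanishing
    (ε₁ ε₂ : ℝ) (hε₂ : 0 < ε₂) (hε : ε₁ + ε₂ < -1) :
    (∃ C : ℝ, ∀ x : ℝ × ℝ,
        |Real.exp (ε₁ * x.1 + ε₂ * x.2) * max (Real.exp x.1 - Real.exp x.2 - 1) 0| ≤ C) ∧
      Tendsto
        (fun x : ℝ × ℝ =>
          Real.exp (ε₁ * x.1 + ε₂ * x.2) * max (Real.exp x.1 - Real.exp x.2 - 1) 0)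
        (cocompact (ℝ × ℝ)) (nhds 0) := by
  set δ : ℝ := min (-(ε₁ + ε₂ + 1)) (ε₂ / 2) with hδdef
  have hδ : 0 < δ := lt_min (by linarith) (by linarith)
  have hδ1 : δ ≤ -(ε₁ + ε₂ + 1) := min_le_left _ _
  have hδ2 : δ ≤ ε₂ / 2 := min_le_right _ _
  have key : ∀ x : ℝ × ℝ,
      |Real.exp (ε₁ * x.1 + ε₂ * x.2) * max (Real.exp x.1 - Real.exp x.2 - 1) 0|
        ≤ Real.exp (-δ * ‖x‖) := by
    rintro ⟨a, b⟩
    by_cases h : Real.exp a - Real.exp b - 1 ≤ 0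
    · simp only [max_eq_right h, mul_zero, abs_zero]
      exact (Real.exp_pos _).le
    · push_neg at h
      have hmax : max (Real.exp a - Real.exp b - 1) 0 = Real.exp a - Real.exp b - 1 :=
        max_eq_left h.le
      have ha : 0 < a := by
        have : (1 : ℝ) < Real.exp a := by
          have := Real.exp_pos b; linarith
        exact Real.exp_lt_exp.mp (by simpa using this)
      have hba : b < a := by
        have : Real.exp b < Real.exp a := by linarith
        exact Real.exp_lt_exp.mp this
      have hnorm : ‖((a, b) : ℝ × ℝ)‖ = max |a| |b| := by
        simp [Prod.norm_def, Real.norm_eq_abs]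
      have hpay : Real.exp a - Real.exp b - 1 ≤ Real.exp a := by
        have := Real.exp_pos b; linarith
      have hbound : Real.exp (ε₁ * a + ε₂ * b) * (Real.exp a - Real.exp b - 1)
          ≤ Real.exp (ε₁ * a + ε₂ * b + a) := by
        calc Real.exp (ε₁ * a + ε₂ * b) * (Real.exp a - Real.exp b - 1)
            ≤ Real.exp (ε₁ * a + ε₂ * b) * Real.exp a :=
              mul_le_mul_of_nonneg_left hpay (Real.exp_pos _).le
          _ = Real.exp (ε₁ * a + ε₂ * b + a) := (Real.exp_add _ _).symm
      have hexp : ε₁ * a + ε₂ * b + a ≤ -δ * max |a| |b| := by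
        rcases le_or_gt 0 b with hb | hb
        · have habs : max |a| |b| = a := by
            rw [abs_of_pos ha, abs_of_nonneg hb, max_eq_left hba.le]
          rw [habs]
          nlinarith [mul_le_mul_of_nonneg_left hba.le hε₂.le,
            mul_le_mul_of_nonneg_right hδ1 ha.le]
        · have habs : max |a| |b| = max a (-b) := by
            rw [abs_of_pos ha, abs_of_neg hb]
          rw [habs]
          rcases max_cases a (-b) with ⟨he, hle⟩ | ⟨he, hle⟩
          · rw [he]
            nlinarith [mul_le_mul_of_nonneg_left hba.le hε₂.le,
              mul_le_mul_of_nonneg_right hδ2 ha.le]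
          · rw [he]
            nlinarith [mul_le_mul_of_nonneg_left hba.le hε₂.le,
              mul_le_mul_of_nonpos_right hδ2 hb.le]
      calc |Real.exp (ε₁ * a + ε₂ * b) * max (Real.exp a - Real.exp b - 1) 0|
          = Real.exp (ε₁ * a + ε₂ * b) * (Real.exp a - Real.exp b - 1) := by
            rw [hmax, abs_of_nonneg (mul_nonneg (Real.exp_pos _).le h.le)]
        _ ≤ Real.exp (ε₁ * a + ε₂ * b + a) := hbound
        _ ≤ Real.exp (-δ * ‖((a, b) : ℝ × ℝ)‖) := by
            apply Real.exp_le_exp.mpr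
            rw [hnorm]; exact hexp
  constructor
  · refine ⟨1, fun x => (key x).trans ?_⟩
    rw [show (1 : ℝ) = Real.exp 0 from (Real.exp_zero).symm]
    apply Real.exp_le_exp.mpr
    have : (0 : ℝ) ≤ ‖x‖ := norm_nonneg x
    nlinarith
  · have hnorm_top : Tendsto (fun x : ℝ × ℝ => ‖x‖) (cocompact (ℝ × ℝ)) atTop :=
      tendsto_norm_cocompact_atTop
    have h1 : Tendsto (fun x : ℝ × ℝ => -δ * ‖x‖) (cocompact (ℝ × ℝ)) atBot :=
      (tendsto_const_mul_atBot_of_neg (by linarith)).mpr hnorm_top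
    have h2 : Tendsto (fun x : ℝ × ℝ => Real.exp (-δ * ‖x‖)) (cocompact (ℝ × ℝ)) (nhds 0) :=
      Real.tendsto_exp_atBot.comp h1
    refine squeeze_zero (fun x => ?_) (fun x => ?_) h2
    · exact mul_nonneg (Real.exp_pos _).le (le_max_right _ _)
    · have := key x
      rwa [abs_of_nonneg (mul_nonneg (Real.exp_pos _).le (le_max_right _ _))] at this
end
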